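/- The map f is adjacency-reducing for the (ℓ,r)-0-insertion channel: for any two strings x, y ∈ S_q(n), if f(x) and f(y) are confusable in the (ℓ,r)-0-insertion channel, then x and y are confusable as well. Equivalently, if x and y are non-confusable then so are f(x) and f(y). -/

import Mathlib

namespace ZeroErrorDup

/-- Output relation of the (ℓ,r)-0-insertion channel acting on strings over the
alphabet A_q = {0,1,…,q−1} (encoded as lists of naturals): after each input symbol,
`c` copies of the block `0^ℓ` are inserted, for some `c ∈ {0,1,…,r}`. -/
inductive IsOutput (ℓ r : ℕ) : List ℕ → List ℕ → Prop
  | nil : IsOutput ℓ r [] []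
  | cons (a : ℕ) (c : ℕ) (hc : c ≤ r) {x y : List ℕ} :
      IsOutput ℓ r x y → IsOutput ℓ r (a :: x) (a :: (List.replicate (c * ℓ) 0 ++ y))

/-- Two strings are confusable if some string is an output of both. -/
def Confusable (ℓ r : ℕ) (x y : List ℕ) : Prop :=
  ∃ z, IsOutput ℓ r x z ∧ IsOutput ℓ r y z

/-- A set of strings is a zero-error code if every two distinct elements are
non-confusable. -/
def ZeroErrorCode (ℓ r : ℕ) (C : Set (List ℕ)) : Prop :=
  ∀ x ∈ C, ∀ y ∈ C, x ≠ y → ¬ Confusable ℓ r x y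

/-- `L ℓ r i j = ((r i + 1)(r ℓ + 1)^j − 1)/r − 1` (the division is exact). -/
def L (ℓ r i j : ℕ) : ℕ := ((r * i + 1) * (r * ℓ + 1) ^ j - 1) / r - 1

/-- `S q n`: strings over `A_q` of length between 1 and `n` whose first symbol is nonzero. -/
def S (q n : ℕ) : Set (List ℕ) :=
  { x | x ≠ [] ∧ x.length ≤ n ∧ (∀ a ∈ x, a < q) ∧ x.headI ≠ 0 }

/-- Reduced run length: the largest integer of the form `L ℓ r i j` (with `1 ≤ i ≤ ℓ`,
`j ≥ 0`) that is at most `u` and congruent to `u` modulo `ℓ` (such an integer always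
exists). -/
noncomputable def g (ℓ r u : ℕ) : ℕ :=
  sSup { m | (∃ i j : ℕ, 1 ≤ i ∧ i ≤ ℓ ∧ m = L ℓ r i j) ∧ m ≤ u ∧ m % ℓ = u % ℓ }

/-- The map `f`, shortening each maximal run of zeros of length `u` to length `g ℓ r u`
and leaving all nonzero symbols in place. -/
noncomputable def f (ℓ r : ℕ) (x : List ℕ) : List ℕ :=
  match h : x.dropWhile (· == 0) with
  | [] => List.replicate (g ℓ r (x.takeWhile (· == 0)).length) 0
  | a :: t =>
      List.replicate (g ℓ r (x.takeWhile (· == 0)).length) 0 ++ a :: f ℓ r t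
termination_by x.length
decreasing_by
  have h1 : (x.dropWhile (· == 0)).length ≤ x.length :=
    (List.dropWhile_sublist _).length_le
  rw [h] at h1
  simp only [List.length_cons] at h1
  omega

lemma pow_eq (ℓ r j : ℕ) : ∃ s, (r*ℓ+1)^j = 1 + (r*ℓ)*s := by
  induction j with
  | zero => exact ⟨0, by simp⟩
  | succ j ih =>
    obtain ⟨s, hs⟩ := ih
    exact ⟨1 + s + (r*ℓ)*s, by rw [pow_succ, hs]; ring⟩

lemma L_key (ℓ r i j : ℕ) (hr : 1 ≤ r) (hi : 1 ≤ i) :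
    r * (L ℓ r i j + 1) + 1 = (r*i+1) * (r*ℓ+1)^j := by
  have h1 : 1 ≤ (r*ℓ+1)^j := Nat.one_le_pow _ _ (by omega)
  have h2 : r + 1 ≤ (r*i+1) * (r*ℓ+1)^j := by
    calc r + 1 ≤ r*i+1 := by nlinarith
    _ = (r*i+1) * 1 := by ring
    _ ≤ (r*i+1) * (r*ℓ+1)^j := Nat.mul_le_mul_left _ h1
  have hdvd : r ∣ (r*i+1) * (r*ℓ+1)^j - 1 := by
    obtain ⟨s, hs⟩ := pow_eq ℓ r j
    rw [hs]
    have : (r*i+1) * (1 + r*ℓ*s) = 1 + r*(i + ℓ*s*(r*i+1)) := by ring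
    rw [this, Nat.add_sub_cancel_left]
    exact Dvd.intro _ rfl
  have h3 : ((r*i+1) * (r*ℓ+1)^j - 1) / r * r = (r*i+1) * (r*ℓ+1)^j - 1 :=
    Nat.div_mul_cancel hdvd
  have h4 : 1 ≤ ((r*i+1) * (r*ℓ+1)^j - 1) / r := by
    rw [Nat.le_div_iff_mul_le (by omega)]; omega
  unfold L
  have h5 : ((r*i+1) * (r*ℓ+1)^j - 1) / r - 1 + 1 = ((r*i+1) * (r*ℓ+1)^j - 1) / r := by omega
  rw [h5, mul_comm r, h3]
  omega

lemma L_mod (ℓ r i j : ℕ) (hr : 1 ≤ r) (hi : 1 ≤ i) (hiℓ : i ≤ ℓ) :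
    L ℓ r i j % ℓ = i - 1 := by
  obtain ⟨s, hs⟩ := pow_eq ℓ r j
  have key := L_key ℓ r i j hr hi
  rw [hs] at key
  have hL : L ℓ r i j = (i - 1) + ℓ * (s * (r*i+1)) := by
    have h0 : (0:ℤ) < (r:ℤ) := by exact_mod_cast hr
    have key' : (r:ℤ) * ((L ℓ r i j : ℤ) + 1) + 1 = ((r:ℤ)*i+1) * (1 + (r:ℤ)*ℓ*s) := by
      exact_mod_cast key
    have h2 : (r:ℤ) * (L ℓ r i j : ℤ) = (r:ℤ) * (((i:ℤ) - 1) + (ℓ:ℤ) * (s * ((r:ℤ)*i+1))) := by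
      ring_nf; ring_nf at key'; linarith
    have h3 : (L ℓ r i j : ℤ) = ((i:ℤ) - 1) + (ℓ:ℤ) * (s * ((r:ℤ)*i+1)) :=
      mul_left_cancel₀ (by omega) h2
    have hi1 : ((i - 1 : ℕ) : ℤ) = (i:ℤ) - 1 := by
      have : 1 ≤ i := hi
      omega
    have h4 : (L ℓ r i j : ℤ) = ((i - 1 : ℕ) : ℤ) + (ℓ:ℤ) * (s * ((r:ℤ)*i+1)) := by
      rw [hi1]; exact h3
    exact_mod_cast h4
  rw [hL, Nat.add_mul_mod_self_left]
  exact Nat.mod_eq_of_lt (by omega)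

lemma L_lt (ℓ r i j : ℕ) (hr : 1 ≤ r) (hℓ : 1 ≤ ℓ) (hi : 1 ≤ i) :
    L ℓ r i j < L ℓ r i (j+1) := by
  have k1 := L_key ℓ r i j hr hi
  have k2 := L_key ℓ r i (j+1) hr hi
  have h1 : (r*i+1) * (r*ℓ+1)^j < (r*i+1) * (r*ℓ+1)^(j+1) := by
    have := Nat.pow_lt_pow_right (show 1 < r*ℓ+1 by nlinarith) (show j < j+1 by omega)
    exact Nat.mul_lt_mul_of_le_of_lt (le_refl _) this (by omega)
  have h2 : r * (L ℓ r i j + 1) < r * (L ℓ r i (j+1) + 1) := by omega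
  have := Nat.lt_of_mul_lt_mul_left h2
  omega

def gSet (ℓ r u : ℕ) : Set ℕ :=
  { m | (∃ i j : ℕ, 1 ≤ i ∧ i ≤ ℓ ∧ m = L ℓ r i j) ∧ m ≤ u ∧ m % ℓ = u % ℓ }

lemma g_eq_sSup (ℓ r u : ℕ) : g ℓ r u = sSup (gSet ℓ r u) := rfl

lemma L_base (ℓ r u : ℕ) (hr : 1 ≤ r) : L ℓ r (u % ℓ + 1) 0 = u % ℓ := by
  unfold L
  rw [pow_zero, mul_one]
  have : (r * (u % ℓ + 1) + 1 - 1) = r * (u % ℓ + 1) := by omega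
  rw [this, Nat.mul_div_cancel_left _ (by omega)]
  omega

lemma mem_gSet_base (ℓ r u : ℕ) (hr : 1 ≤ r) (hℓ : 1 ≤ ℓ) : u % ℓ ∈ gSet ℓ r u := by
  refine ⟨⟨u % ℓ + 1, 0, by omega, ?_, (L_base ℓ r u hr).symm⟩, Nat.mod_le u ℓ, ?_⟩
  · have := Nat.mod_lt u (show 0 < ℓ by omega); omega
  · exact Nat.mod_mod_of_dvd u dvd_rfl

lemma gSet_bdd (ℓ r u : ℕ) : BddAbove (gSet ℓ r u) := ⟨u, fun m hm => hm.2.1⟩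

lemma g_mem (ℓ r u : ℕ) (hr : 1 ≤ r) (hℓ : 1 ≤ ℓ) : g ℓ r u ∈ gSet ℓ r u :=
  Nat.sSup_mem ⟨_, mem_gSet_base ℓ r u hr hℓ⟩ (gSet_bdd ℓ r u)

lemma g_le (ℓ r u : ℕ) (hr : 1 ≤ r) (hℓ : 1 ≤ ℓ) : g ℓ r u ≤ u := (g_mem ℓ r u hr hℓ).2.1

lemma g_mod (ℓ r u : ℕ) (hr : 1 ≤ r) (hℓ : 1 ≤ ℓ) : g ℓ r u % ℓ = u % ℓ := (g_mem ℓ r u hr hℓ).2.2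

lemma g_max (ℓ r u m : ℕ) (hm : m ∈ gSet ℓ r u) : m ≤ g ℓ r u := le_csSup (gSet_bdd ℓ r u) hm

lemma g_spec (ℓ r u : ℕ) (hr : 1 ≤ r) (hℓ : 1 ≤ ℓ) :
    ∃ j, g ℓ r u = L ℓ r (u % ℓ + 1) j := by
  obtain ⟨⟨i, j, hi1, hi2, hL⟩, _, hmod⟩ := g_mem ℓ r u hr hℓ
  have := L_mod ℓ r i j hr hi1 hi2
  rw [hL] at hmod
  have : i = u % ℓ + 1 := by omega
  exact ⟨j, by rw [hL, this]⟩

lemma g_zero (ℓ r : ℕ) (hr : 1 ≤ r) (hℓ : 1 ≤ ℓ) : g ℓ r 0 = 0 :=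
  Nat.le_antisymm (g_le ℓ r 0 hr hℓ) (Nat.zero_le _)

def RC (ℓ r u v : ℕ) : Prop :=
  u % ℓ = v % ℓ ∧ v + 1 ≤ (r*ℓ+1)*(u+1) ∧ u + 1 ≤ (r*ℓ+1)*(v+1)

lemma g_upper (ℓ r u j : ℕ) (hr : 1 ≤ r) (hℓ : 1 ≤ ℓ)
    (h : g ℓ r u = L ℓ r (u % ℓ + 1) j) :
    (r*(u % ℓ + 1)+1) * (r*ℓ+1)^j ≤ r*(u+1)+1 := by
  have k := L_key ℓ r (u % ℓ + 1) j hr (by omega)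
  have hle := g_le ℓ r u hr hℓ
  rw [h] at hle
  have : r * (L ℓ r (u % ℓ + 1) j + 1) ≤ r * (u+1) := Nat.mul_le_mul_left _ (by omega)
  omega

lemma g_lower (ℓ r u j : ℕ) (hr : 1 ≤ r) (hℓ : 1 ≤ ℓ)
    (h : g ℓ r u = L ℓ r (u % ℓ + 1) j) :
    r*(u+1)+1 + r*ℓ ≤ (r*(u % ℓ + 1)+1) * (r*ℓ+1)^(j+1) := by
  have hiℓ : u % ℓ + 1 ≤ ℓ := by have := Nat.mod_lt u (show 0 < ℓ by omega); omega
  have hmodL : L ℓ r (u % ℓ + 1) (j+1) % ℓ = u % ℓ := by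
    rw [L_mod ℓ r _ _ hr (by omega) hiℓ]; omega
  have hgt : u < L ℓ r (u % ℓ + 1) (j+1) := by
    by_contra hle
    push_neg at hle
    have hmem : L ℓ r (u % ℓ + 1) (j+1) ∈ gSet ℓ r u :=
      ⟨⟨u % ℓ + 1, j+1, by omega, hiℓ, rfl⟩, hle, hmodL⟩
    have h1 := g_max ℓ r u _ hmem
    have h2 := L_lt ℓ r (u % ℓ + 1) j hr hℓ (by omega)
    omega
  have hdvd : ℓ ∣ L ℓ r (u % ℓ + 1) (j+1) - u :=
    (Nat.modEq_iff_dvd' (le_of_lt hgt)).mp (by unfold Nat.ModEq; omega)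
  have hge : u + ℓ ≤ L ℓ r (u % ℓ + 1) (j+1) := by
    have := Nat.le_of_dvd (by omega) hdvd; omega
  have k := L_key ℓ r (u % ℓ + 1) (j+1) hr (by omega)
  have h3 : r*(u+ℓ+1) ≤ r*(L ℓ r (u % ℓ + 1) (j+1) + 1) := Nat.mul_le_mul_left _ (by omega)
  have h4 : r*(u+ℓ+1) = r*(u+1) + r*ℓ := by ring
  omega

lemma core (ℓ r u v : ℕ) (hr : 1 ≤ r) (hℓ : 1 ≤ ℓ)
    (h : RC ℓ r (g ℓ r u) (g ℓ r v)) : RC ℓ r u v := by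
  obtain ⟨hmod, h1, h2⟩ := h
  have hmu := g_mod ℓ r u hr hℓ
  have hmv := g_mod ℓ r v hr hℓ
  have hmoduv : u % ℓ = v % ℓ := by omega
  obtain ⟨ju, hju⟩ := g_spec ℓ r u hr hℓ
  obtain ⟨jv, hjv⟩ := g_spec ℓ r v hr hℓ
  rw [← hmoduv] at hjv
  have ku := L_key ℓ r (u % ℓ + 1) ju hr (by omega)
  have kv := L_key ℓ r (u % ℓ + 1) jv hr (by omega)
  rw [← hju] at ku
  rw [← hjv] at kv
  have hrl : 1 ≤ r * ℓ := Nat.one_le_iff_ne_zero.mpr (by positivity)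
  -- show ju = jv
  have hj : ju = jv := by
    rcases lt_trichotomy ju jv with hlt | heq | hgt
    · exfalso
      have hpow : (r*(u % ℓ + 1)+1)*(r*ℓ+1)^(ju+1) ≤ (r*(u % ℓ + 1)+1)*(r*ℓ+1)^jv :=
        Nat.mul_le_mul_left _ (Nat.pow_le_pow_right (by omega) (by omega))
      have e1 : (r*(u % ℓ + 1)+1)*(r*ℓ+1)^(ju+1)
          = (r*ℓ+1) * ((r*(u % ℓ + 1)+1)*(r*ℓ+1)^ju) := by ring
      have hx : r*(g ℓ r v+1) ≤ (r*ℓ+1)*(r*(g ℓ r u+1)) := by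
        calc r*(g ℓ r v+1) ≤ r*((r*ℓ+1)*(g ℓ r u+1)) := Nat.mul_le_mul_left _ h1
          _ = (r*ℓ+1)*(r*(g ℓ r u+1)) := by ring
      have e2 : (r*ℓ+1) * (r*(g ℓ r u+1)+1) = (r*ℓ+1)*(r*(g ℓ r u+1)) + (r*ℓ+1) := by ring
      have e3 : (r*ℓ+1) * (r*(g ℓ r u+1)+1) ≤ r*(g ℓ r v+1)+1 := by
        rw [ku]; rw [e1] at hpow; omega
      omega
    · exact heq
    · exfalso
      have hpow : (r*(u % ℓ + 1)+1)*(r*ℓ+1)^(jv+1) ≤ (r*(u % ℓ + 1)+1)*(r*ℓ+1)^ju :=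
        Nat.mul_le_mul_left _ (Nat.pow_le_pow_right (by omega) (by omega))
      have e1 : (r*(u % ℓ + 1)+1)*(r*ℓ+1)^(jv+1)
          = (r*ℓ+1) * ((r*(u % ℓ + 1)+1)*(r*ℓ+1)^jv) := by ring
      have hx : r*(g ℓ r u+1) ≤ (r*ℓ+1)*(r*(g ℓ r v+1)) := by
        calc r*(g ℓ r u+1) ≤ r*((r*ℓ+1)*(g ℓ r v+1)) := Nat.mul_le_mul_left _ h2
          _ = (r*ℓ+1)*(r*(g ℓ r v+1)) := by ring
      have e2 : (r*ℓ+1) * (r*(g ℓ r v+1)+1) = (r*ℓ+1)*(r*(g ℓ r v+1)) + (r*ℓ+1) := by ring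
      have e3 : (r*ℓ+1) * (r*(g ℓ r v+1)+1) ≤ r*(g ℓ r u+1)+1 := by
        rw [kv]; rw [e1] at hpow; omega
      omega
  subst hj
  refine ⟨hmoduv, ?_, ?_⟩
  · -- v + 1 ≤ (rℓ+1)(u+1)
    have hup := g_upper ℓ r u ju hr hℓ hju
    have hlo := g_lower ℓ r v ju hr hℓ (by rw [hjv, ← hmoduv])
    rw [← hmoduv] at hlo
    have hmul : (r*ℓ+1) * ((r*(u % ℓ + 1)+1)*(r*ℓ+1)^ju) ≤ (r*ℓ+1) * (r*(u+1)+1) :=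
      Nat.mul_le_mul_left _ hup
    have e1 : (r*(u % ℓ + 1)+1)*(r*ℓ+1)^(ju+1)
        = (r*ℓ+1) * ((r*(u % ℓ + 1)+1)*(r*ℓ+1)^ju) := by ring
    have e2 : (r*ℓ+1) * (r*(u+1)+1) = r*((r*ℓ+1)*(u+1)) + r*ℓ + 1 := by ring
    have h5 : r*(v+1) ≤ r*((r*ℓ+1)*(u+1)) := by omega
    exact Nat.le_of_mul_le_mul_left (by omega) (show 0 < r by omega)
  · have hup := g_upper ℓ r v ju hr hℓ (by rw [hjv, ← hmoduv])
    rw [← hmoduv] at hup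
    have hlo := g_lower ℓ r u ju hr hℓ hju
    have hmul : (r*ℓ+1) * ((r*(u % ℓ + 1)+1)*(r*ℓ+1)^ju) ≤ (r*ℓ+1) * (r*(v+1)+1) :=
      Nat.mul_le_mul_left _ hup
    have e1 : (r*(u % ℓ + 1)+1)*(r*ℓ+1)^(ju+1)
        = (r*ℓ+1) * ((r*(u % ℓ + 1)+1)*(r*ℓ+1)^ju) := by ring
    have e2 : (r*ℓ+1) * (r*(v+1)+1) = r*((r*ℓ+1)*(v+1)) + r*ℓ + 1 := by ring
    have h5 : r*(u+1) ≤ r*((r*ℓ+1)*(v+1)) := by omega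
    exact Nat.le_of_mul_le_mul_left (by omega) (show 0 < r by omega)

def dec : List (ℕ × ℕ) → List ℕ
  | [] => []
  | p :: ps => p.1 :: (List.replicate p.2 0 ++ dec ps)

def Good (ps : List (ℕ × ℕ)) : Prop := ∀ p ∈ ps, p.1 ≠ 0

def Hd (s : List ℕ) : Prop := ∀ a, s.head? = some a → a ≠ 0

lemma hd_dec (ps : List (ℕ × ℕ)) (h : Good ps) : Hd (dec ps) := by
  cases ps with
  | nil => intro a ha; simp [dec] at ha
  | cons p ps =>
    intro a ha
    simp [dec] at ha
    exact ha ▸ h p (by simp)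

lemma repl_cons (k : ℕ) (z : List ℕ) :
    (0 :: (List.replicate k 0 ++ z) : List ℕ) = List.replicate (1+k) 0 ++ z := by
  show List.replicate 1 0 ++ (List.replicate k 0 ++ z) = _
  rw [← List.append_assoc, ← List.replicate_add]

lemma repl_merge (a b : ℕ) (z : List ℕ) :
    (0 :: (List.replicate a 0 ++ (List.replicate b 0 ++ z)) : List ℕ)
      = List.replicate (1+a+b) 0 ++ z := by
  show List.replicate 1 0 ++ (List.replicate a 0 ++ (List.replicate b 0 ++ z)) = _
  rw [← List.append_assoc, ← List.append_assoc, ← List.replicate_add, ← List.replicate_add]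

lemma output_zeros (ℓ r u m : ℕ) (w z : List ℕ) (hm : m ≤ r * u)
    (hw : IsOutput ℓ r w z) :
    IsOutput ℓ r (List.replicate u 0 ++ w) (List.replicate (u + m * ℓ) 0 ++ z) := by
  induction u generalizing m with
  | zero => simp at hm; simp [hm]; exact hw
  | succ u ih =>
    have hru : r * (u+1) = r * u + r := by ring
    have hc : min m r ≤ r := min_le_right m r
    have hbound : m - min m r ≤ r * u := by omega
    have step := IsOutput.cons 0 (min m r) hc (ih (m - min m r) hbound)
    have e1 : List.replicate (u+1) 0 ++ w = 0 :: (List.replicate u 0 ++ w) := by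
      simp [List.replicate_succ]
    have hsplit : (min m r + (m - min m r)) * ℓ = min m r * ℓ + (m - min m r) * ℓ :=
      add_mul _ _ _
    have hmm : min m r + (m - min m r) = m := by omega
    have e2 : List.replicate (u + 1 + m * ℓ) 0 ++ z
        = 0 :: (List.replicate (min m r * ℓ) 0 ++ (List.replicate (u + (m - min m r) * ℓ) 0 ++ z)) := by
      rw [repl_merge]
      rw [hmm] at hsplit
      rw [show 1 + min m r * ℓ + (u + (m - min m r) * ℓ) = u + 1 + m * ℓ from by omega]
    rw [e1, e2]
    exact step

lemma output_zeros_inv (ℓ r u : ℕ) (w z : List ℕ)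
    (h : IsOutput ℓ r (List.replicate u 0 ++ w) z) :
    ∃ m z₂, m ≤ r * u ∧ IsOutput ℓ r w z₂ ∧ z = List.replicate (u + m * ℓ) 0 ++ z₂ := by
  induction u generalizing z with
  | zero => exact ⟨0, z, by omega, by simpa using h, by simp⟩
  | succ u ih =>
    rw [List.replicate_succ, List.cons_append] at h
    cases h with
    | cons _ c hc hsub =>
      obtain ⟨m, z₂, hm, hout, hz⟩ := ih _ hsub
      refine ⟨c + m, z₂, ?_, hout, ?_⟩
      · have : r * (u+1) = r * u + r := by ring
        omega
      · rw [hz, ← List.append_assoc, ← List.replicate_add, repl_cons]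
        have h9 : (c+m) * ℓ = c*ℓ + m*ℓ := add_mul _ _ _
        rw [show 1 + (c * ℓ + (u + m * ℓ)) = u + 1 + (c+m) * ℓ from by omega]

lemma output_cons_run (ℓ r a u m : ℕ) (x z : List ℕ) (hm : m ≤ r * (u+1))
    (hx : IsOutput ℓ r x z) :
    IsOutput ℓ r (a :: (List.replicate u 0 ++ x)) (a :: (List.replicate (u + m * ℓ) 0 ++ z)) := by
  have hru : r * (u+1) = r * u + r := by ring
  have hc : min m r ≤ r := min_le_right m r
  have hbound : m - min m r ≤ r * u := by omega
  have step := IsOutput.cons a (min m r) hc (output_zeros ℓ r u (m - min m r) x z hbound hx)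
  have hsplit : (min m r + (m - min m r)) * ℓ = min m r * ℓ + (m - min m r) * ℓ := add_mul _ _ _
  have hmm : min m r + (m - min m r) = m := by omega
  rw [hmm] at hsplit
  have e : (List.replicate (min m r * ℓ) 0 ++ (List.replicate (u + (m - min m r) * ℓ) 0 ++ z))
      = List.replicate (u + m * ℓ) 0 ++ z := by
    rw [← List.append_assoc, ← List.replicate_add]
    rw [show min m r * ℓ + (u + (m - min m r) * ℓ) = u + m * ℓ from by omega]
  rw [e] at step
  exact step

def Rel (ℓ r : ℕ) (p q : ℕ × ℕ) : Prop :=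
  q.1 = p.1 ∧ ∃ m, m ≤ r * (p.2 + 1) ∧ q.2 = p.2 + m * ℓ

lemma output_inv (ℓ r : ℕ) : ∀ (ps : List (ℕ × ℕ)) (z : List ℕ),
    IsOutput ℓ r (dec ps) z →
    ∃ qs, List.Forall₂ (Rel ℓ r) ps qs ∧ z = dec qs := by
  intro ps
  induction ps with
  | nil =>
    intro z h
    simp only [dec] at h
    cases h
    exact ⟨[], List.Forall₂.nil, rfl⟩
  | cons p ps ih =>
    intro z h
    simp only [dec] at h
    cases h with
    | cons _ c hc hsub =>
      obtain ⟨m, z₂, hm, hout, hz⟩ := output_zeros_inv ℓ r p.2 (dec ps) _ hsub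
      obtain ⟨qs, hrel, hzq⟩ := ih z₂ hout
      refine ⟨(p.1, p.2 + (c + m) * ℓ) :: qs, List.Forall₂.cons ⟨rfl, c + m, ?_, rfl⟩ hrel, ?_⟩
      · have : r * (p.2 + 1) = r * p.2 + r := by ring
        omega
      · simp only [dec, hz, hzq]
        congr 1
        rw [← List.append_assoc, ← List.replicate_add]
        have h9 : (c + m) * ℓ = c * ℓ + m * ℓ := add_mul _ _ _
        rw [show c * ℓ + (p.2 + m * ℓ) = p.2 + (c + m) * ℓ from by omega]

lemma output_build (ℓ r : ℕ) (ps qs : List (ℕ × ℕ))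
    (h : List.Forall₂ (Rel ℓ r) ps qs) : IsOutput ℓ r (dec ps) (dec qs) := by
  induction h with
  | nil => exact IsOutput.nil
  | cons hpq _ ih =>
    rename_i p q ps' qs' _
    obtain ⟨h1, m, hm, h2⟩ := hpq
    have := output_cons_run ℓ r p.1 p.2 m (dec ps') (dec qs') hm ih
    simp only [dec]
    rw [h1, h2]
    exact this

lemma zeros_cancel : ∀ (u v : ℕ) (s t : List ℕ), Hd s → Hd t →
    List.replicate u 0 ++ s = List.replicate v 0 ++ t → u = v ∧ s = t := by
  intro u
  induction u with
  | zero =>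
    intro v s t hs ht h
    cases v with
    | zero => exact ⟨rfl, by simpa using h⟩
    | succ v =>
      exfalso
      rw [List.replicate_succ] at h
      simp only [List.replicate_zero, List.nil_append, List.cons_append] at h
      have : s.head? = some 0 := by rw [h]; rfl
      exact hs 0 this rfl
  | succ u ih =>
    intro v s t hs ht h
    cases v with
    | zero =>
      exfalso
      rw [List.replicate_succ] at h
      simp only [List.replicate_zero, List.nil_append, List.cons_append] at h
      have : t.head? = some 0 := by rw [← h]; rfl
      exact ht 0 this rfl
    | succ v =>
      rw [List.replicate_succ, List.replicate_succ] at h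
      simp only [List.cons_append, List.cons.injEq] at h
      obtain ⟨he, hst⟩ := ih v s t hs ht h.2
      exact ⟨by omega, hst⟩

lemma dec_inj : ∀ (ps qs : List (ℕ × ℕ)), Good ps → Good qs → dec ps = dec qs → ps = qs := by
  intro ps
  induction ps with
  | nil =>
    intro qs _ _ h
    cases qs with
    | nil => rfl
    | cons q qs => simp [dec] at h
  | cons p ps ih =>
    intro qs hps hqs h
    cases qs with
    | nil => simp [dec] at h
    | cons q qs =>
      simp only [dec, List.cons.injEq] at h
      obtain ⟨h1, h2⟩ := h
      have hs : Hd (dec ps) := hd_dec ps (fun x hx => hps x (by simp [hx]))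
      have ht : Hd (dec qs) := hd_dec qs (fun x hx => hqs x (by simp [hx]))
      obtain ⟨h3, h4⟩ := zeros_cancel p.2 q.2 _ _ hs ht h2
      have := ih qs (fun x hx => hps x (by simp [hx])) (fun x hx => hqs x (by simp [hx])) h4
      rw [this]
      congr 1
      exact Prod.ext h1 h3

lemma rc_of_meet (ℓ r u v m m' : ℕ) (hm : m ≤ r * (u+1)) (hm' : m' ≤ r * (v+1))
    (heq : u + m * ℓ = v + m' * ℓ) : RC ℓ r u v := by
  refine ⟨?_, ?_, ?_⟩
  · calc u % ℓ = (u + m * ℓ) % ℓ := (Nat.add_mul_mod_self_right u m ℓ).symm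
      _ = (v + m' * ℓ) % ℓ := by rw [heq]
      _ = v % ℓ := Nat.add_mul_mod_self_right v m' ℓ
  · have h1 : m * ℓ ≤ (r * (u+1)) * ℓ := Nat.mul_le_mul_right _ hm
    have h2 : (r*ℓ+1)*(u+1) = (u+1) + (r*(u+1))*ℓ := by ring
    omega
  · have h1 : m' * ℓ ≤ (r * (v+1)) * ℓ := Nat.mul_le_mul_right _ hm'
    have h2 : (r*ℓ+1)*(v+1) = (v+1) + (r*(v+1))*ℓ := by ring
    omega

lemma meet_of_rc (ℓ r u v : ℕ) (hℓ : 1 ≤ ℓ) (h : RC ℓ r u v) :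
    ∃ m m', m ≤ r * (u+1) ∧ m' ≤ r * (v+1) ∧ u + m * ℓ = v + m' * ℓ := by
  obtain ⟨hmod, h1, h2⟩ := h
  rcases le_total u v with hle | hle
  · have hdvd : ℓ ∣ v - u := (Nat.modEq_iff_dvd' hle).mp (by unfold Nat.ModEq; omega)
    refine ⟨(v - u) / ℓ, 0, ?_, by omega, ?_⟩
    · have hb : (v - u) / ℓ * ℓ = v - u := Nat.div_mul_cancel hdvd
      have h3 : (r*ℓ+1)*(u+1) = (u+1) + (r*(u+1))*ℓ := by ring
      have h4 : v - u ≤ (r*(u+1)) * ℓ := by omega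
      refine Nat.le_of_mul_le_mul_right ?_ (show 0 < ℓ by omega)
      rw [hb]; exact h4
    · have hb : (v - u) / ℓ * ℓ = v - u := Nat.div_mul_cancel hdvd
      omega
  · have hdvd : ℓ ∣ u - v := (Nat.modEq_iff_dvd' hle).mp (by unfold Nat.ModEq; omega)
    refine ⟨0, (u - v) / ℓ, by omega, ?_, ?_⟩
    · have hb : (u - v) / ℓ * ℓ = u - v := Nat.div_mul_cancel hdvd
      have h3 : (r*ℓ+1)*(v+1) = (v+1) + (r*(v+1))*ℓ := by ring
      have h4 : u - v ≤ (r*(v+1)) * ℓ := by omega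
      refine Nat.le_of_mul_le_mul_right ?_ (show 0 < ℓ by omega)
      rw [hb]; exact h4
    · have hb : (u - v) / ℓ * ℓ = u - v := Nat.div_mul_cancel hdvd
      omega


lemma good_of_rel (ℓ r : ℕ) (ps qs : List (ℕ × ℕ)) (h : List.Forall₂ (Rel ℓ r) ps qs) :
    Good ps → Good qs := by
  induction h with
  | nil => exact fun h => h
  | cons hpq _ ih =>
    rename_i p q ps' qs' _
    intro hps x hx
    rcases List.mem_cons.mp hx with hx | hx
    · rw [hx, hpq.1]; exact hps p (by simp)
    · exact ih (fun y hy => hps y (by simp [hy])) x hx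

lemma conf_iff (ℓ r : ℕ) (hℓ : 1 ≤ ℓ) (ps qs : List (ℕ × ℕ)) (hps : Good ps) (hqs : Good qs) :
    Confusable ℓ r (dec ps) (dec qs) ↔
      List.Forall₂ (fun p q => p.1 = q.1 ∧ RC ℓ r p.2 q.2) ps qs := by
  constructor
  · rintro ⟨z, hz1, hz2⟩
    obtain ⟨t1, hrel1, hzt1⟩ := output_inv ℓ r ps z hz1
    obtain ⟨t2, hrel2, hzt2⟩ := output_inv ℓ r qs z hz2
    have ht12 : t1 = t2 := dec_inj t1 t2 (good_of_rel ℓ r ps t1 hrel1 hps)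
      (good_of_rel ℓ r qs t2 hrel2 hqs) (by rw [← hzt1, ← hzt2])
    subst ht12
    rw [List.forall₂_iff_get] at hrel1 hrel2 ⊢
    obtain ⟨hl1, hg1⟩ := hrel1
    obtain ⟨hl2, hg2⟩ := hrel2
    refine ⟨by omega, fun i h₁ h₂ => ?_⟩
    obtain ⟨ha1, m, hm, he1⟩ := hg1 i h₁ (by omega)
    obtain ⟨ha2, m', hm', he2⟩ := hg2 i h₂ (by omega)
    exact ⟨by rw [← ha1, ← ha2], rc_of_meet ℓ r _ _ m m' hm hm' (by omega)⟩
  · intro hrel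
    clear hps hqs
    induction hrel with
    | nil => exact ⟨[], IsOutput.nil, IsOutput.nil⟩
    | cons hpq htail ih =>
      rename_i p q ps' qs'
      obtain ⟨z, hz1, hz2⟩ := ih
      obtain ⟨m, m', hm, hm', heq⟩ := meet_of_rc ℓ r p.2 q.2 hℓ hpq.2
      refine ⟨p.1 :: (List.replicate (p.2 + m * ℓ) 0 ++ z), ?_, ?_⟩
      · exact output_cons_run ℓ r p.1 p.2 m _ _ hm hz1
      · show IsOutput ℓ r (dec (q :: qs')) _
        simp only [dec]
        rw [hpq.1, heq]
        exact output_cons_run ℓ r q.1 q.2 m' _ _ hm' hz2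

lemma f_nil (ℓ r : ℕ) (x : List ℕ) (h : x.dropWhile (· == 0) = []) :
    f ℓ r x = List.replicate (g ℓ r (x.takeWhile (· == 0)).length) 0 := by
  rw [f]; split
  · rfl
  · rename_i a t h'; rw [h] at h'; exact absurd h' (by simp)

lemma f_cons (ℓ r : ℕ) (x : List ℕ) (a : ℕ) (t : List ℕ) (h : x.dropWhile (· == 0) = a :: t) :
    f ℓ r x = List.replicate (g ℓ r (x.takeWhile (· == 0)).length) 0 ++ a :: f ℓ r t := by
  rw [f]; split
  · rename_i h'; rw [h] at h'; exact absurd h' (by simp)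
  · rename_i a' t' h'; rw [h] at h'; cases h'; rfl

lemma tw_repl (u : ℕ) (s : List ℕ) :
    (List.replicate u 0 ++ s).takeWhile (· == 0) = List.replicate u 0 ++ s.takeWhile (· == 0) := by
  induction u with
  | zero => simp
  | succ u ih => rw [List.replicate_succ]; simp [List.takeWhile_cons, ih]

lemma dw_repl (u : ℕ) (s : List ℕ) :
    (List.replicate u 0 ++ s).dropWhile (· == 0) = s.dropWhile (· == 0) := by
  induction u with
  | zero => simp
  | succ u ih => rw [List.replicate_succ]; simp [List.dropWhile_cons, ih]

lemma f_tail (ℓ r : ℕ) (hr : 1 ≤ r) (hℓ : 1 ≤ ℓ) :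
    ∀ (ps : List (ℕ × ℕ)), Good ps → ∀ u,
    f ℓ r (List.replicate u 0 ++ dec ps)
      = List.replicate (g ℓ r u) 0 ++ dec (ps.map (fun p => (p.1, g ℓ r p.2))) := by
  intro ps
  induction ps with
  | nil =>
    intro _ u
    simp only [dec, List.append_nil, List.map_nil]
    rw [f_nil ℓ r _ (by rw [← List.append_nil (List.replicate u 0), dw_repl]; rfl)]
    rw [← List.append_nil (List.replicate u 0), tw_repl]
    simp
  | cons p ps ih =>
    intro hgood u
    have hp1 : p.1 ≠ 0 := hgood p (by simp)
    have hbeq : (p.1 == 0) = false := by simpa using hp1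
    simp only [dec]
    have hdw : (List.replicate u 0 ++ (p.1 :: (List.replicate p.2 0 ++ dec ps))).dropWhile (· == 0)
        = p.1 :: (List.replicate p.2 0 ++ dec ps) := by
      rw [dw_repl, List.dropWhile_cons]
      simp [hbeq]
    have htw : (List.replicate u 0 ++ (p.1 :: (List.replicate p.2 0 ++ dec ps))).takeWhile (· == 0)
        = List.replicate u 0 := by
      rw [tw_repl, List.takeWhile_cons]
      simp [hbeq]
    rw [f_cons ℓ r _ _ _ hdw, htw, List.length_replicate]
    rw [ih (fun x hx => hgood x (by simp [hx])) p.2]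
    rfl

lemma f_dec (ℓ r : ℕ) (hr : 1 ≤ r) (hℓ : 1 ≤ ℓ) (ps : List (ℕ × ℕ)) (hgood : Good ps) :
    f ℓ r (dec ps) = dec (ps.map (fun p => (p.1, g ℓ r p.2))) := by
  cases ps with
  | nil =>
    simp only [dec, List.map_nil]
    rw [f_nil ℓ r [] rfl]
    simp [g_zero ℓ r hr hℓ]
  | cons p ps =>
    have hp1 : p.1 ≠ 0 := hgood p (by simp)
    have hbeq : (p.1 == 0) = false := by simpa using hp1
    simp only [dec]
    have hdw : (p.1 :: (List.replicate p.2 0 ++ dec ps)).dropWhile (· == 0)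
        = p.1 :: (List.replicate p.2 0 ++ dec ps) := by
      rw [List.dropWhile_cons]; simp [hbeq]
    have htw : (p.1 :: (List.replicate p.2 0 ++ dec ps)).takeWhile (· == 0) = [] := by
      rw [List.takeWhile_cons]; simp [hbeq]
    rw [f_cons ℓ r _ _ _ hdw, htw]
    simp only [List.length_nil, g_zero ℓ r hr hℓ, List.replicate_zero, List.nil_append]
    rw [f_tail ℓ r hr hℓ ps (fun x hx => hgood x (by simp [hx])) p.2]
    rfl

lemma exists_dec : ∀ (N : ℕ) (x : List ℕ), x.length ≤ N → Hd x →
    ∃ ps, Good ps ∧ dec ps = x := by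
  intro N
  induction N with
  | zero =>
    intro x hx _
    have : x = [] := List.length_eq_zero_iff.mp (by omega)
    exact ⟨[], by simp [Good], by simp [dec, this]⟩
  | succ N ih =>
    intro x hx hhd
    cases x with
    | nil => exact ⟨[], by simp [Good], by simp [dec]⟩
    | cons a t =>
      have ha : a ≠ 0 := hhd a rfl
      have htw : t.takeWhile (· == 0) = List.replicate (t.takeWhile (· == 0)).length 0 :=
        List.eq_replicate_of_mem (fun b hb => by simpa using List.mem_takeWhile_imp hb)
      have hsplit : t.takeWhile (· == 0) ++ t.dropWhile (· == 0) = t :=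
        List.takeWhile_append_dropWhile
      have hhd2 : Hd (t.dropWhile (· == 0)) := by
        intro b hb hb0
        have := List.head?_dropWhile_not (· == 0) t
        rw [hb] at this
        simp [hb0] at this
      have hlen : (t.dropWhile (· == 0)).length ≤ N := by
        have h1 := (List.dropWhile_sublist (l := t) (· == 0)).length_le
        simp only [List.length_cons] at hx
        omega
      obtain ⟨ps, hgood, hdec⟩ := ih _ hlen hhd2
      refine ⟨(a, (t.takeWhile (· == 0)).length) :: ps, ?_, ?_⟩
      · intro x hx
        rcases List.mem_cons.mp hx with h | h
        · rw [h]; exact ha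
        · exact hgood x h
      · simp only [dec]
        rw [hdec, ← htw, hsplit]

/-- `f` is adjacency-reducing for the (ℓ,r)-0-insertion channel: for
`x, y ∈ S q n`, if `f x` and `f y` are confusable then so are `x` and `y`. -/
theorem stmt8 (q ℓ r n : ℕ) (hq : 2 ≤ q) (hℓ : 1 ≤ ℓ) (hr : 1 ≤ r)
    (x y : List ℕ) (hx : x ∈ S q n) (hy : y ∈ S q n)
    (h : Confusable ℓ r (f ℓ r x) (f ℓ r y)) :
    Confusable ℓ r x y := by
  obtain ⟨hxne, hxlen, hxq, hxhd⟩ := hx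
  obtain ⟨hyne, hylen, hyq, hyhd⟩ := hy
  have hhdx : Hd x := by
    cases x with
    | nil => exact absurd rfl hxne
    | cons a t =>
      intro b hb
      simp only [List.head?_cons, Option.some.injEq] at hb
      rw [← hb]
      simpa using hxhd
  have hhdy : Hd y := by
    cases y with
    | nil => exact absurd rfl hyne
    | cons a t =>
      intro b hb
      simp only [List.head?_cons, Option.some.injEq] at hb
      rw [← hb]
      simpa using hyhd
  obtain ⟨px, hgx, hdx⟩ := exists_dec x.length x (le_refl _) hhdx
  obtain ⟨py, hgy, hdy⟩ := exists_dec y.length y (le_refl _) hhdy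
  rw [← hdx, ← hdy] at h ⊢
  rw [f_dec ℓ r hr hℓ px hgx, f_dec ℓ r hr hℓ py hgy] at h
  have hgx' : Good (px.map (fun p => (p.1, g ℓ r p.2))) := by
    intro p hp
    simp only [List.mem_map] at hp
    obtain ⟨q', hq', rfl⟩ := hp
    exact hgx q' hq'
  have hgy' : Good (py.map (fun p => (p.1, g ℓ r p.2))) := by
    intro p hp
    simp only [List.mem_map] at hp
    obtain ⟨q', hq', rfl⟩ := hp
    exact hgy q' hq'
  rw [conf_iff ℓ r hℓ _ _ hgx' hgy'] at h
  rw [conf_iff ℓ r hℓ px py hgx hgy]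
  rw [List.forall₂_map_left_iff, List.forall₂_map_right_iff] at h
  exact h.imp (fun {p q} hpq => ⟨hpq.1, core ℓ r _ _ hr hℓ hpq.2⟩)

end ZeroErrorDup
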